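/- If w ∈ D(I) is bounded and ζ : X → ℝ is a Lipschitz function with compact support, then I[ζ] < ∞ and the product ζw belongs to D(I); moreover I[ζw] ≤ (‖ζ‖_∞ √(I[w]) + ‖w‖_∞ √(I[ζ]))². -/

import Mathlib

open MeasureTheory Real
open scoped ENNReal NNReal

noncomputable section

variable {X : Type*}

/-- The quadratic form `I[w] = (1/2)∬ k(x,y)(w(x)-w(y))² dμ dμ`, as an extended real. -/
def formI [MeasurableSpace X] (μ : Measure X) (k : X → X → ℝ≥0∞) (w : X → ℝ) : ℝ≥0∞ :=
  (1 / 2 : ℝ≥0∞) *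
    ∫⁻ p : X × X, k p.1 p.2 * ENNReal.ofReal ((w p.1 - w p.2) ^ 2) ∂(μ.prod μ)

/-- The form domain `D(I)`. -/
def memDI [MeasurableSpace X] (μ : Measure X) (k : X → X → ℝ≥0∞) (w : X → ℝ) : Prop :=
  Measurable w ∧ formI μ k w < ⊤

/-- The bilinear form `I[v,w]`. -/
def formI₂ [MeasurableSpace X] (μ : Measure X) (k : X → X → ℝ≥0∞) (v w : X → ℝ) : ℝ :=
  (1 / 2) *
    ∫ p : X × X, (k p.1 p.2).toReal * (v p.1 - v p.2) * (w p.1 - w p.2) ∂(μ.prod μ)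

private lemma ennreal_half_pow (x : ℝ≥0∞) : (x ^ (1/2 : ℝ)) ^ 2 = x := by
  rw [← ENNReal.rpow_natCast (x ^ (1/2 : ℝ)) 2, ← ENNReal.rpow_mul]
  norm_num

private lemma ennreal_pow_half (x : ℝ≥0∞) : (x ^ 2) ^ (1/2 : ℝ) = x := by
  rw [← ENNReal.rpow_natCast x 2, ← ENNReal.rpow_mul]
  norm_num

/-- The raw integral of `k (ζ(x)-ζ(y))²` is finite for Lipschitz compactly supported `ζ`. -/
private lemma lipschitz_raw_finite [MetricSpace X] [MeasurableSpace X] [BorelSpace X]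
    (μ : Measure X)
    (k : X → X → ℝ≥0∞)
    (hksymm : ∀ x y, k x y = k y x)
    (hk : ∀ K : Set X, IsCompact K →
      ∫⁻ p in K ×ˢ (Set.univ : Set X),
          k p.1 p.2 * ENNReal.ofReal (dist p.1 p.2 ^ 2) ∂(μ.prod μ) < ⊤)
    [SFinite μ]
    (L : ℝ≥0) (ζ : X → ℝ) (hζ : LipschitzWith L ζ) (hζc : HasCompactSupport ζ) :
    ∫⁻ p : X × X, k p.1 p.2 * ENNReal.ofReal ((ζ p.1 - ζ p.2) ^ 2) ∂(μ.prod μ) < ⊤ := by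
  set K := tsupport ζ with hKdef
  have hK : IsCompact K := hζc
  have hKm : MeasurableSet K := (isClosed_tsupport ζ).measurableSet
  set S : Set (X × X) := K ×ˢ (Set.univ : Set X) ∪ (Set.univ : Set X) ×ˢ K with hSdef
  have hSm : MeasurableSet S :=
    (hKm.prod MeasurableSet.univ).union (MeasurableSet.univ.prod hKm)
  set g : X × X → ℝ≥0∞ :=
    fun p => (L : ℝ≥0∞) ^ 2 * (k p.1 p.2 * ENNReal.ofReal (dist p.1 p.2 ^ 2)) with hgdef
  have hpt : ∀ p : X × X,
      k p.1 p.2 * ENNReal.ofReal ((ζ p.1 - ζ p.2) ^ 2) ≤ S.indicator g p := by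
    intro p
    by_cases hp : p ∈ S
    · rw [Set.indicator_of_mem hp]
      have h1 : |ζ p.1 - ζ p.2| ≤ (L : ℝ) * dist p.1 p.2 := by
        have := hζ.dist_le_mul p.1 p.2
        rwa [Real.dist_eq] at this
      have h2 : (ζ p.1 - ζ p.2) ^ 2 ≤ (L : ℝ) ^ 2 * dist p.1 p.2 ^ 2 := by
        rw [← sq_abs, ← mul_pow]
        exact pow_le_pow_left₀ (abs_nonneg _) h1 2
      calc k p.1 p.2 * ENNReal.ofReal ((ζ p.1 - ζ p.2) ^ 2)
          ≤ k p.1 p.2 * ENNReal.ofReal ((L : ℝ) ^ 2 * dist p.1 p.2 ^ 2) := by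
            exact mul_le_mul_right (ENNReal.ofReal_le_ofReal h2) _
        _ = g p := by
            rw [hgdef, ENNReal.ofReal_mul (by positivity)]
            rw [show ENNReal.ofReal ((L : ℝ) ^ 2) = (L : ℝ≥0∞) ^ 2 by
              rw [ENNReal.ofReal_pow L.coe_nonneg, ENNReal.ofReal_coe_nnreal]]
            ring
    · rw [Set.indicator_of_notMem hp]
      have h1 : p.1 ∉ K := fun h => hp (Or.inl ⟨h, trivial⟩)
      have h2 : p.2 ∉ K := fun h => hp (Or.inr ⟨trivial, h⟩)
      rw [image_eq_zero_of_notMem_tsupport h1, image_eq_zero_of_notMem_tsupport h2]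
      simp
  have hmono := lintegral_mono hpt (μ := μ.prod μ)
  rw [lintegral_indicator hSm] at hmono
  have hfin : ∫⁻ p in S, g p ∂(μ.prod μ) < ⊤ := by
    refine lt_of_le_of_lt (lintegral_union_le _ _ _) ?_
    have hswap : ∫⁻ p in (Set.univ : Set X) ×ˢ K,
        k p.1 p.2 * ENNReal.ofReal (dist p.1 p.2 ^ 2) ∂(μ.prod μ)
        = ∫⁻ p in K ×ˢ (Set.univ : Set X),
        k p.1 p.2 * ENNReal.ofReal (dist p.1 p.2 ^ 2) ∂(μ.prod μ) := by
      have hmp : MeasurePreserving (Prod.swap : X × X → X × X) (μ.prod μ) (μ.prod μ) :=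
        Measure.measurePreserving_swap
      have hemb : MeasurableEmbedding (Prod.swap : X × X → X × X) :=
        MeasurableEquiv.prodComm.measurableEmbedding
      have hpre : (Prod.swap : X × X → X × X) ⁻¹' (K ×ˢ (Set.univ : Set X))
          = (Set.univ : Set X) ×ˢ K := by
        ext p; simp [Set.mem_prod]
      have := hmp.setLIntegral_comp_preimage_emb hemb
        (fun p : X × X => k p.1 p.2 * ENNReal.ofReal (dist p.1 p.2 ^ 2))
        (K ×ˢ (Set.univ : Set X))
      rw [hpre] at this
      rw [← this]
      refine lintegral_congr fun p => ?_
      simp only [Prod.fst_swap, Prod.snd_swap]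
      rw [hksymm p.2 p.1, dist_comm]
    have e1 : ∫⁻ p in K ×ˢ (Set.univ : Set X), g p ∂(μ.prod μ)
        = (L : ℝ≥0∞) ^ 2 * ∫⁻ p in K ×ˢ (Set.univ : Set X),
            k p.1 p.2 * ENNReal.ofReal (dist p.1 p.2 ^ 2) ∂(μ.prod μ) :=
      lintegral_const_mul' _ _ (by simp)
    have e2 : ∫⁻ p in (Set.univ : Set X) ×ˢ K, g p ∂(μ.prod μ)
        = (L : ℝ≥0∞) ^ 2 * ∫⁻ p in (Set.univ : Set X) ×ˢ K,
            k p.1 p.2 * ENNReal.ofReal (dist p.1 p.2 ^ 2) ∂(μ.prod μ) :=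
      lintegral_const_mul' _ _ (by simp)
    rw [e1, e2, hswap, ← two_mul, ← mul_assoc]
    refine ENNReal.mul_lt_top ?_ (hk K hK)
    refine ENNReal.mul_lt_top (by simp) ?_
    exact ENNReal.pow_lt_top ENNReal.coe_lt_top
  exact lt_of_le_of_lt hmono hfin

/-- The main Cauchy–Schwarz/Minkowski estimate for the raw integrals. -/
private lemma raw_product_estimate [MetricSpace X] [MeasurableSpace X] [BorelSpace X]
    (μ : Measure X)
    (k : X → X → ℝ≥0∞) (hkmeas : Measurable (Function.uncurry k))
    (w : X → ℝ) (hwm : Measurable w)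
    (ζ : X → ℝ) (hζm : Measurable ζ) :
    ∫⁻ p : X × X, k p.1 p.2 * ENNReal.ofReal ((ζ p.1 * w p.1 - ζ p.2 * w p.2) ^ 2) ∂(μ.prod μ) ≤
      ((⨆ x, (‖ζ x‖₊ : ℝ≥0∞)) *
          (∫⁻ p : X × X, k p.1 p.2 * ENNReal.ofReal ((w p.1 - w p.2) ^ 2) ∂(μ.prod μ))
            ^ (1/2 : ℝ) +
        (⨆ x, (‖w x‖₊ : ℝ≥0∞)) *
          (∫⁻ p : X × X, k p.1 p.2 * ENNReal.ofReal ((ζ p.1 - ζ p.2) ^ 2) ∂(μ.prod μ))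
            ^ (1/2 : ℝ)) ^ 2 := by
  set ν := μ.prod μ with hν
  set A : ℝ≥0∞ := ⨆ x, (‖ζ x‖₊ : ℝ≥0∞) with hA
  set B : ℝ≥0∞ := ⨆ x, (‖w x‖₊ : ℝ≥0∞) with hB
  set F : X × X → ℝ≥0∞ := fun p => (k p.1 p.2) ^ (1/2 : ℝ) with hF
  have hkm : Measurable fun p : X × X => k p.1 p.2 := hkmeas
  have hFsq : ∀ p : X × X, F p ^ 2 = k p.1 p.2 := fun p => ennreal_half_pow _
  set f : X × X → ℝ≥0∞ := fun p => F p * (A * ENNReal.ofReal |w p.1 - w p.2|) with hf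
  set g : X × X → ℝ≥0∞ := fun p => F p * (B * ENNReal.ofReal |ζ p.1 - ζ p.2|) with hg
  have hFm : Measurable F := hkm.pow_const _
  have hfm : Measurable f := by
    exact hFm.mul (measurable_const.mul
      (((hwm.comp measurable_fst).sub (hwm.comp measurable_snd)).abs.ennreal_ofReal))
  have hgm : Measurable g := by
    exact hFm.mul (measurable_const.mul
      (((hζm.comp measurable_fst).sub (hζm.comp measurable_snd)).abs.ennreal_ofReal))
  have hofsq : ∀ a : ℝ, ENNReal.ofReal (a ^ 2) = ENNReal.ofReal |a| ^ 2 := by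
    intro a
    rw [← sq_abs, ENNReal.ofReal_pow (abs_nonneg _)]
  have hpt : ∀ p : X × X,
      k p.1 p.2 * ENNReal.ofReal ((ζ p.1 * w p.1 - ζ p.2 * w p.2) ^ 2) ≤ (f p + g p) ^ 2 := by
    intro p
    have habs : |ζ p.1 * w p.1 - ζ p.2 * w p.2|
        ≤ |ζ p.1| * |w p.1 - w p.2| + |w p.2| * |ζ p.1 - ζ p.2| := by
      have h : ζ p.1 * w p.1 - ζ p.2 * w p.2
          = ζ p.1 * (w p.1 - w p.2) + w p.2 * (ζ p.1 - ζ p.2) := by ring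
      rw [h]
      exact (abs_add_le _ _).trans (by rw [abs_mul, abs_mul])
    have hA1 : ENNReal.ofReal |ζ p.1| ≤ A := by
      rw [← Real.norm_eq_abs, ofReal_norm, enorm_eq_nnnorm]
      exact le_iSup (fun x => (‖ζ x‖₊ : ℝ≥0∞)) p.1
    have hB1 : ENNReal.ofReal |w p.2| ≤ B := by
      rw [← Real.norm_eq_abs, ofReal_norm, enorm_eq_nnnorm]
      exact le_iSup (fun x => (‖w x‖₊ : ℝ≥0∞)) p.2
    have hof : ENNReal.ofReal |ζ p.1 * w p.1 - ζ p.2 * w p.2|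
        ≤ A * ENNReal.ofReal |w p.1 - w p.2| + B * ENNReal.ofReal |ζ p.1 - ζ p.2| := by
      refine (ENNReal.ofReal_le_ofReal habs).trans ?_
      rw [ENNReal.ofReal_add (by positivity) (by positivity),
        ENNReal.ofReal_mul (abs_nonneg _), ENNReal.ofReal_mul (abs_nonneg _)]
      exact add_le_add (mul_le_mul_left hA1 _) (mul_le_mul_left hB1 _)
    calc k p.1 p.2 * ENNReal.ofReal ((ζ p.1 * w p.1 - ζ p.2 * w p.2) ^ 2)
        = (F p * ENNReal.ofReal |ζ p.1 * w p.1 - ζ p.2 * w p.2|) ^ 2 := by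
          rw [mul_pow, hFsq, hofsq]
      _ ≤ (F p * (A * ENNReal.ofReal |w p.1 - w p.2| + B * ENNReal.ofReal |ζ p.1 - ζ p.2|)) ^ 2 :=
          pow_le_pow_left' (mul_le_mul_right hof _) 2
      _ = (f p + g p) ^ 2 := by rw [hf, hg]; ring_nf
  have hIf : ∫⁻ p, f p ^ 2 ∂ν
      = A ^ 2 * ∫⁻ p, k p.1 p.2 * ENNReal.ofReal ((w p.1 - w p.2) ^ 2) ∂ν := by
    rw [← lintegral_const_mul'' _ (by fun_prop : AEMeasurable
      (fun p : X × X => k p.1 p.2 * ENNReal.ofReal ((w p.1 - w p.2) ^ 2)) ν)]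
    refine lintegral_congr fun p => ?_
    rw [hf]
    simp only
    rw [mul_pow, hFsq, hofsq]
    ring
  have hIg : ∫⁻ p, g p ^ 2 ∂ν
      = B ^ 2 * ∫⁻ p, k p.1 p.2 * ENNReal.ofReal ((ζ p.1 - ζ p.2) ^ 2) ∂ν := by
    rw [← lintegral_const_mul'' _ (by fun_prop : AEMeasurable
      (fun p : X × X => k p.1 p.2 * ENNReal.ofReal ((ζ p.1 - ζ p.2) ^ 2)) ν)]
    refine lintegral_congr fun p => ?_
    rw [hg]
    simp only
    rw [mul_pow, hFsq, hofsq]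
    ring
  have hmink := ENNReal.lintegral_Lp_add_le (p := 2) (μ := ν) hfm.aemeasurable hgm.aemeasurable
    (by norm_num)
  have hconv : ∀ h : X × X → ℝ≥0∞, (fun p => h p ^ (2:ℝ)) = fun p => h p ^ 2 := by
    intro h; funext p; rw [← ENNReal.rpow_natCast (h p) 2]; norm_num
  calc ∫⁻ p, k p.1 p.2 * ENNReal.ofReal ((ζ p.1 * w p.1 - ζ p.2 * w p.2) ^ 2) ∂ν
      ≤ ∫⁻ p, (f p + g p) ^ 2 ∂ν := lintegral_mono hpt
    _ = ((∫⁻ p, (f p + g p) ^ (2:ℝ) ∂ν) ^ (1/2 : ℝ)) ^ 2 := by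
        rw [show (fun p => (f p + g p) ^ (2:ℝ)) = fun p => (f p + g p) ^ 2 from hconv _,
          ennreal_half_pow]
    _ ≤ ((∫⁻ p, f p ^ (2:ℝ) ∂ν) ^ (1/2 : ℝ) + (∫⁻ p, g p ^ (2:ℝ) ∂ν) ^ (1/2 : ℝ)) ^ 2 := by
        refine pow_le_pow_left' ?_ 2
        simpa using hmink
    _ = (A * (∫⁻ p, k p.1 p.2 * ENNReal.ofReal ((w p.1 - w p.2) ^ 2) ∂ν) ^ (1/2 : ℝ) +
          B * (∫⁻ p, k p.1 p.2 * ENNReal.ofReal ((ζ p.1 - ζ p.2) ^ 2) ∂ν) ^ (1/2 : ℝ)) ^ 2 := by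
        rw [hconv f, hconv g, hIf, hIg,
          ENNReal.mul_rpow_of_nonneg _ _ (by norm_num : (0:ℝ) ≤ 1/2),
          ENNReal.mul_rpow_of_nonneg _ _ (by norm_num : (0:ℝ) ≤ 1/2),
          ennreal_pow_half, ennreal_pow_half]

/-- products of bounded form-domain functions with Lipschitz functions of
compact support stay in the form domain. -/
theorem formDomain_mul_lipschitz [MetricSpace X] [MeasurableSpace X] [BorelSpace X]
    (μ : Measure X) [SigmaFinite μ]
    (k : X → X → ℝ≥0∞) (hkmeas : Measurable (Function.uncurry k))
    (hkpos : ∀ x y, 0 < k x y) (hksymm : ∀ x y, k x y = k y x)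
    (hk : ∀ K : Set X, IsCompact K →
      ∫⁻ p in K ×ˢ (Set.univ : Set X),
          k p.1 p.2 * ENNReal.ofReal (dist p.1 p.2 ^ 2) ∂(μ.prod μ) < ⊤)
    (w : X → ℝ) (hw : memDI μ k w) (M : ℝ) (hwbd : ∀ x, |w x| ≤ M)
    (L : ℝ≥0) (ζ : X → ℝ) (hζ : LipschitzWith L ζ) (hζc : HasCompactSupport ζ) :
    formI μ k ζ < ⊤ ∧ memDI μ k (fun x => ζ x * w x) ∧
      formI μ k (fun x => ζ x * w x) ≤
        ((⨆ x, (‖ζ x‖₊ : ℝ≥0∞)) * formI μ k w ^ (1 / 2 : ℝ) +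
            (⨆ x, (‖w x‖₊ : ℝ≥0∞)) * formI μ k ζ ^ (1 / 2 : ℝ)) ^ 2 := by
  obtain ⟨hwm, hwI⟩ := hw
  have hζm : Measurable ζ := hζ.continuous.measurable
  set A : ℝ≥0∞ := ⨆ x, (‖ζ x‖₊ : ℝ≥0∞) with hA
  set B : ℝ≥0∞ := ⨆ x, (‖w x‖₊ : ℝ≥0∞) with hB
  set Iw : ℝ≥0∞ :=
    ∫⁻ p : X × X, k p.1 p.2 * ENNReal.ofReal ((w p.1 - w p.2) ^ 2) ∂(μ.prod μ) with hIw
  set Iζ : ℝ≥0∞ :=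
    ∫⁻ p : X × X, k p.1 p.2 * ENNReal.ofReal ((ζ p.1 - ζ p.2) ^ 2) ∂(μ.prod μ) with hIζ
  have hIζfin : Iζ < ⊤ := lipschitz_raw_finite μ k hksymm hk L ζ hζ hζc
  have h1 : formI μ k ζ < ⊤ := by
    rw [formI]
    exact ENNReal.mul_lt_top (by norm_num) hIζfin
  -- the key estimate, in terms of raw integrals
  have hkey := raw_product_estimate μ k hkmeas w hwm ζ hζm
  -- rewrite the goal's right-hand side
  have hRHS : (A * formI μ k w ^ (1 / 2 : ℝ) + B * formI μ k ζ ^ (1 / 2 : ℝ)) ^ 2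
      = (1 / 2 : ℝ≥0∞) * (A * Iw ^ (1/2 : ℝ) + B * Iζ ^ (1/2 : ℝ)) ^ 2 := by
    rw [formI, formI, ← hIw, ← hIζ,
      ENNReal.mul_rpow_of_nonneg _ _ (by norm_num : (0:ℝ) ≤ 1/2),
      ENNReal.mul_rpow_of_nonneg _ _ (by norm_num : (0:ℝ) ≤ 1/2)]
    have : A * ((1/2 : ℝ≥0∞) ^ (1/2:ℝ) * Iw ^ (1/2:ℝ))
        + B * ((1/2 : ℝ≥0∞) ^ (1/2:ℝ) * Iζ ^ (1/2:ℝ))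
        = (1/2 : ℝ≥0∞) ^ (1/2:ℝ) * (A * Iw ^ (1/2:ℝ) + B * Iζ ^ (1/2:ℝ)) := by ring
    rw [this, mul_pow, ennreal_half_pow]
  have hmain : formI μ k (fun x => ζ x * w x)
      ≤ (A * formI μ k w ^ (1 / 2 : ℝ) + B * formI μ k ζ ^ (1 / 2 : ℝ)) ^ 2 := by
    rw [hRHS, formI]
    exact mul_le_mul_right hkey _
  have hAfin : A < ⊤ := by
    obtain ⟨C, hC⟩ := hζc.exists_bound_of_continuous hζ.continuous
    refine lt_of_le_of_lt (iSup_le fun x => ?_) (ENNReal.ofReal_lt_top (r := C))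
    rw [← enorm_eq_nnnorm, ← ofReal_norm]
    exact ENNReal.ofReal_le_ofReal (hC x)
  have hBfin : B < ⊤ := by
    refine lt_of_le_of_lt (iSup_le fun x => ?_) (ENNReal.ofReal_lt_top (r := M))
    rw [← enorm_eq_nnnorm, ← ofReal_norm, Real.norm_eq_abs]
    exact ENNReal.ofReal_le_ofReal (hwbd x)
  have hfin2 : formI μ k (fun x => ζ x * w x) < ⊤ := by
    refine lt_of_le_of_lt hmain ?_
    refine ENNReal.pow_lt_top ?_
    refine ENNReal.add_lt_top.mpr ⟨ENNReal.mul_lt_top hAfin ?_, ENNReal.mul_lt_top hBfin ?_⟩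
    · exact ENNReal.rpow_lt_top_of_nonneg (by norm_num) hwI.ne
    · exact ENNReal.rpow_lt_top_of_nonneg (by norm_num) h1.ne
  exact ⟨h1, ⟨hζm.mul hwm, hfin2⟩, hmain⟩

end
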